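/- Let (y_i, x_i)_{i=1}^n be a finite sample with y_i > 0 and x_i ∈ {0,1}, and suppose both groups {i : x_i = 0} and {i : x_i = 1} are nonempty. Define the group arithmetic means ȳ_j = (1/|{i : x_i = j}|)·Σ_{i : x_i = j} y_i and the group log-means L_j = (1/|{i : x_i = j}|)·Σ_{i : x_i = j} log y_i for j ∈ {0,1}, and set β̂₁ = L₁ − L₀ (the OLS slope of log y on a constant and x). Then the smearing-corrected estimator satisfies the exact algebraic identity e^{β̂₁} · ( ȳ₁·e^{−L₁} ) / ( ȳ₀·e^{−L₀} ) − 1 = ȳ₁/ȳ₀ − 1. Since the PPML (Poisson pseudo-maximum-likelihood) estimates of the exponential model E[y|x] = e^{γ₀ + γ₁x} with binary x satisfy e^{γ̂₀} = ȳ₀ and e^{γ̂₁} = ȳ₁/ȳ₀, the Manning (1998) correction estimator coincides with e^{γ̂₁} − 1, i.e. PPML in levels is equivalent to the smearing-corrected log-linear estimator with a binary regressor. -/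

import Mathlib

open Real

/-- PPML with a binary regressor equals the smearing-corrected
log-linear estimator. With group means `ȳⱼ`, group log-means `Lⱼ`, OLS slope
`β̂₁ = L₁ − L₀`, the smearing-corrected estimator satisfies
`e^{β̂₁}·(ȳ₁ e^{−L₁})/(ȳ₀ e^{−L₀}) − 1 = ȳ₁/ȳ₀ − 1`; hence for the PPML coefficients,
which satisfy `e^{γ̂₀} = ȳ₀` and `e^{γ̂₁} = ȳ₁/ȳ₀`, it equals `e^{γ̂₁} − 1`. -/
theorem stmt18 {n : ℕ} (y x : Fin n → ℝ)
    (hy : ∀ i, 0 < y i) (hx : ∀ i, x i = 0 ∨ x i = 1)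
    (S0 S1 : Finset (Fin n))
    (hS0 : S0 = Finset.univ.filter (fun i => x i = 0))
    (hS1 : S1 = Finset.univ.filter (fun i => x i = 1))
    (h0 : S0.Nonempty) (h1 : S1.Nonempty)
    (ybar0 ybar1 L0 L1 b1 : ℝ)
    (hyb0 : ybar0 = (∑ i ∈ S0, y i) / (S0.card : ℝ))
    (hyb1 : ybar1 = (∑ i ∈ S1, y i) / (S1.card : ℝ))
    (hL0 : L0 = (∑ i ∈ S0, Real.log (y i)) / (S0.card : ℝ))
    (hL1 : L1 = (∑ i ∈ S1, Real.log (y i)) / (S1.card : ℝ))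
    (hb1 : b1 = L1 - L0) :
    Real.exp b1 * ((ybar1 * Real.exp (-L1)) / (ybar0 * Real.exp (-L0))) - 1
      = ybar1 / ybar0 - 1
    ∧ ∀ γ₀ γ₁ : ℝ, Real.exp γ₀ = ybar0 → Real.exp γ₁ = ybar1 / ybar0 →
        Real.exp b1 * ((ybar1 * Real.exp (-L1)) / (ybar0 * Real.exp (-L0))) - 1
          = Real.exp γ₁ - 1 := by
  have hy0 : 0 < ybar0 := by
    rw [hyb0]
    apply div_pos
    · exact Finset.sum_pos (fun i _ => hy i) h0
    · exact_mod_cast Finset.card_pos.mpr h0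
  have key : Real.exp b1 * ((ybar1 * Real.exp (-L1)) / (ybar0 * Real.exp (-L0))) - 1
      = ybar1 / ybar0 - 1 := by
    rw [hb1, Real.exp_sub, Real.exp_neg, Real.exp_neg]
    field_simp
  exact ⟨key, fun γ₀ γ₁ h₀ h₁ => by rw [key, h₁]⟩
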